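/- Let 0 < S₀ ≤ S₁, let 0 ≤ x₀ < x₁ ≤ 1, and let S : [0,1] → ℝ be continuous, non-decreasing, with S(x) = S₀ on [0,x₀], S(x) = S₁ on [x₁,1], and S₀ < S(x) < S₁ for x ∈ (x₀,x₁). If for every continuous ΔS : [0,1] → ℝ vanishing outside (x₀,x₁) with ∫₀¹ ΔS(x) dx = 0 one has ∫₀¹ (1−x)·S(x)·ΔS(x) dx = 0, then there is a constant q > 0 such that S(x) = q/(1−x) for all x ∈ (x₀,x₁). -/

import Mathlib

open MeasureTheory intervalIntegral

/-- A continuous nonnegative function with zero integral over `[0,1]` vanishes on `(0,1)`. -/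
lemma aux_pos_integral {f : ℝ → ℝ} (hf : Continuous f) (h0 : ∀ x, 0 ≤ f x)
    {t : ℝ} (ht : t ∈ Set.Ioo (0:ℝ) 1) (hft : 0 < f t) :
    0 < ∫ x in (0:ℝ)..1, f x := by
  rw [intervalIntegral.integral_pos_iff_support_of_nonneg_ae
      (Filter.Eventually.of_forall h0) (hf.intervalIntegrable _ _)]
  refine ⟨one_pos, ?_⟩
  obtain ⟨ε, hε, hball⟩ := Metric.isOpen_iff.1 (isOpen_lt continuous_const hf)
    t (by simpa using hft)
  have hsub : Set.Ioo (max 0 (t - ε)) (min 1 t) ⊆ Function.support f ∩ Set.Ioc 0 1 := by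
    intro x hx
    rcases hx with ⟨hx1, hx2⟩
    have hx0 : 0 < x := lt_of_le_of_lt (le_max_left _ _) hx1
    have hx1' : x ≤ 1 := le_of_lt (lt_of_lt_of_le hx2 (min_le_left _ _))
    have hxt : x < t := lt_of_lt_of_le hx2 (min_le_right _ _)
    have hxte : t - ε < x := lt_of_le_of_lt (le_max_right _ _) hx1
    have : x ∈ Metric.ball t ε := by
      rw [Metric.mem_ball, Real.dist_eq, abs_lt]; constructor <;> linarith
    have hfx : 0 < f x := hball this
    exact ⟨ne_of_gt hfx, hx0, hx1'⟩
  have hlt : max 0 (t - ε) < min 1 t := by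
    rcases ht with ⟨ht0, ht1⟩
    rw [max_lt_iff, lt_min_iff, lt_min_iff]
    exact ⟨⟨one_pos, ht0⟩, by linarith, by linarith⟩
  calc (0:ENNReal) < volume (Set.Ioo (max 0 (t - ε)) (min 1 t)) := by
        rw [Real.volume_Ioo]; simp [hlt]
    _ ≤ volume (Function.support f ∩ Set.Ioc 0 1) := measure_mono hsub

theorem middle_segment_shape (S₀ S₁ x₀ x₁ : ℝ) (hS₀ : 0 < S₀) (hS₀S₁ : S₀ ≤ S₁)
    (hx₀ : 0 ≤ x₀) (hx₀x₁ : x₀ < x₁) (hx₁ : x₁ ≤ 1)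
    (S : ℝ → ℝ) (hcont : ContinuousOn S (Set.Icc 0 1)) (hmono : MonotoneOn S (Set.Icc 0 1))
    (hleft : ∀ x ∈ Set.Icc 0 x₀, S x = S₀)
    (hright : ∀ x ∈ Set.Icc x₁ 1, S x = S₁)
    (hmid : ∀ x ∈ Set.Ioo x₀ x₁, S₀ < S x ∧ S x < S₁)
    (hvar : ∀ ΔS : ℝ → ℝ, Continuous ΔS → (∀ x, x ∉ Set.Ioo x₀ x₁ → ΔS x = 0) →
      (∫ x in (0:ℝ)..1, ΔS x) = 0 → (∫ x in (0:ℝ)..1, (1 - x) * S x * ΔS x) = 0) :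
    ∃ q : ℝ, 0 < q ∧ ∀ x ∈ Set.Ioo x₀ x₁, S x = q / (1 - x) := by
  have hIooSub : Set.Ioo x₀ x₁ ⊆ Set.Ioo (0:ℝ) 1 := fun x hx =>
    ⟨lt_of_le_of_lt hx₀ hx.1, lt_of_lt_of_le hx.2 hx₁⟩
  have huIcc : Set.uIcc (0:ℝ) 1 = Set.Icc 0 1 := Set.uIcc_of_le zero_le_one
  -- the weight function
  set w : ℝ → ℝ := fun x => max ((x - x₀) * (x₁ - x)) 0 with hw
  have wcont : Continuous w := (continuous_id.sub continuous_const).mul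
    (continuous_const.sub continuous_id) |>.max continuous_const
  have wnonneg : ∀ x, 0 ≤ w x := fun x => le_max_right _ _
  have wzero : ∀ x, x ∉ Set.Ioo x₀ x₁ → w x = 0 := by
    intro x hx
    rw [Set.mem_Ioo, not_and_or] at hx
    have : (x - x₀) * (x₁ - x) ≤ 0 := by
      rcases hx with h | h
      · push_neg at h
        exact mul_nonpos_of_nonpos_of_nonneg (by linarith) (by nlinarith)
      · push_neg at h
        exact mul_nonpos_of_nonneg_of_nonpos (by nlinarith) (by linarith)
    simpa [hw] using max_eq_right this
  have wpos : ∀ x ∈ Set.Ioo x₀ x₁, 0 < w x := by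
    intro x hx
    have : 0 < (x - x₀) * (x₁ - x) := mul_pos (by linarith [hx.1]) (by linarith [hx.2])
    simp only [hw]
    rw [max_eq_left this.le]; exact this
  -- g = (1-x) S x, continuous on [0,1]
  have gcont : ContinuousOn (fun x => (1 - x) * S x) (Set.Icc (0:ℝ) 1) :=
    ((continuous_const.sub continuous_id).continuousOn).mul hcont
  -- interval-integrability helper
  have hint : ∀ φ : ℝ → ℝ, Continuous φ →
      IntervalIntegrable (fun x => (1 - x) * S x * φ x) volume 0 1 := by
    intro φ hφ
    apply ContinuousOn.intervalIntegrable
    rw [huIcc]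
    exact gcont.mul hφ.continuousOn
  -- midpoint
  set t₀ : ℝ := (x₀ + x₁) / 2 with ht₀
  have ht₀mem : t₀ ∈ Set.Ioo x₀ x₁ := ⟨by simp [ht₀]; linarith, by simp [ht₀]; linarith⟩
  -- W := ∫ w  > 0
  set W : ℝ := ∫ x in (0:ℝ)..1, w x with hW
  have hWpos : 0 < W :=
    aux_pos_integral wcont wnonneg (hIooSub ht₀mem) (wpos _ ht₀mem)
  set c : ℝ := (∫ x in (0:ℝ)..1, (1 - x) * S x * w x) / W with hc
  -- key: for any continuous φ supported in (x₀,x₁), ∫ g φ = c ∫ φ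
  have key : ∀ φ : ℝ → ℝ, Continuous φ → (∀ x, x ∉ Set.Ioo x₀ x₁ → φ x = 0) →
      (∫ x in (0:ℝ)..1, (1 - x) * S x * φ x) = c * (∫ x in (0:ℝ)..1, φ x) := by
    intro φ hφ hφ0
    set k : ℝ := (∫ x in (0:ℝ)..1, φ x) / W with hk
    have hΔcont : Continuous (fun x => φ x - k * w x) :=
      hφ.sub (continuous_const.mul wcont)
    have hΔ0 : ∀ x, x ∉ Set.Ioo x₀ x₁ → φ x - k * w x = 0 := by
      intro x hx; rw [hφ0 x hx, wzero x hx]; ring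
    have hΔint : (∫ x in (0:ℝ)..1, (φ x - k * w x)) = 0 := by
      rw [intervalIntegral.integral_sub (g := fun x => k * w x) (hφ.intervalIntegrable _ _)
        ((continuous_const.mul wcont).intervalIntegrable _ _),
        intervalIntegral.integral_const_mul]
      rw [hk]
      field_simp
      simp [hW]
    have := hvar _ hΔcont hΔ0 hΔint
    have hexp : (∫ x in (0:ℝ)..1, (1 - x) * S x * (φ x - k * w x))
        = (∫ x in (0:ℝ)..1, (1 - x) * S x * φ x)
          - k * (∫ x in (0:ℝ)..1, (1 - x) * S x * w x) := by
      have h1 : (fun x => (1 - x) * S x * (φ x - k * w x))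
          = fun x => (1 - x) * S x * φ x - k * ((1 - x) * S x * w x) := by
        funext x; ring
      rw [h1, intervalIntegral.integral_sub (hint φ hφ)
        (by simpa using (hint w wcont).const_mul k),
        intervalIntegral.integral_const_mul]
    rw [hexp] at this
    have : (∫ x in (0:ℝ)..1, (1 - x) * S x * φ x)
        = k * (∫ x in (0:ℝ)..1, (1 - x) * S x * w x) := by linarith
    rw [this, hk, hc]
    field_simp
  -- clamped version of g
  set cl : ℝ → ℝ := fun x => max x₀ (min x x₁) with hcl
  have hclcont : Continuous cl := continuous_const.max (continuous_id.min continuous_const)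
  have hclmem : ∀ x, cl x ∈ Set.Icc (0:ℝ) 1 := by
    intro x
    constructor
    · exact le_trans hx₀ (le_max_left _ _)
    · rw [hcl]; simp only [max_le_iff]
      exact ⟨by linarith, le_trans (min_le_right _ _) hx₁⟩
  have hclid : ∀ x ∈ Set.Icc x₀ x₁, cl x = x := by
    intro x hx
    rw [hcl]; simp only []
    rw [min_eq_left hx.2, max_eq_right hx.1]
  set h : ℝ → ℝ := fun x => (1 - cl x) * S (cl x) with hh
  have hhcont : Continuous h := by
    have hScl : Continuous (fun x => S (cl x)) :=
      hcont.comp_continuous hclcont hclmem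
    exact (continuous_const.sub hclcont).mul hScl
  -- apply key to φ = (h - c) * w
  set φ : ℝ → ℝ := fun x => (h x - c) * w x with hφdef
  have hφcont : Continuous φ := (hhcont.sub continuous_const).mul wcont
  have hφ0 : ∀ x, x ∉ Set.Ioo x₀ x₁ → φ x = 0 := by
    intro x hx; rw [hφdef]; simp only []; rw [wzero x hx]; ring
  have hkey := key φ hφcont hφ0
  -- relation of integrands
  have hFeq : ∀ x, (1 - x) * S x * φ x - c * φ x = (h x - c) ^ 2 * w x := by
    intro x
    by_cases hx : x ∈ Set.Icc x₀ x₁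
    · have : h x = (1 - x) * S x := by rw [hh]; simp only []; rw [hclid x hx]
      rw [hφdef]; simp only []; rw [this]; ring
    · have : w x = 0 := by
        apply wzero
        intro hx'; exact hx (Set.Ioo_subset_Icc_self hx')
      rw [hφdef]; simp only []; rw [this]; ring
  have hF0 : (∫ x in (0:ℝ)..1, (h x - c) ^ 2 * w x) = 0 := by
    have h1 : (∫ x in (0:ℝ)..1, ((1 - x) * S x * φ x - c * φ x)) = 0 := by
      rw [intervalIntegral.integral_sub (hint φ hφcont)
        ((hφcont.intervalIntegrable _ _).const_mul c),
        intervalIntegral.integral_const_mul, hkey]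
      ring
    calc (∫ x in (0:ℝ)..1, (h x - c) ^ 2 * w x)
        = ∫ x in (0:ℝ)..1, ((1 - x) * S x * φ x - c * φ x) :=
          intervalIntegral.integral_congr (fun x _ => (hFeq x).symm)
      _ = 0 := h1
  -- conclude (h x - c)^2 * w x = 0 on (x₀, x₁)
  have hgc : ∀ x ∈ Set.Ioo x₀ x₁, (1 - x) * S x = c := by
    intro x hx
    by_contra hne
    have hhx : h x = (1 - x) * S x := by
      rw [hh]; simp only []; rw [hclid x (Set.Ioo_subset_Icc_self hx)]
    have hne' : h x - c ≠ 0 := by rw [hhx]; exact sub_ne_zero_of_ne hne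
    have hpos : 0 < (h x - c) ^ 2 * w x :=
      mul_pos (pow_two_pos_of_ne_zero hne') (wpos x hx)
    have hcontF : Continuous (fun x => (h x - c) ^ 2 * w x) :=
      ((hhcont.sub continuous_const).pow 2).mul wcont
    have := aux_pos_integral hcontF
      (fun y => mul_nonneg (sq_nonneg _) (wnonneg y)) (hIooSub hx) hpos
    rw [hF0] at this
    exact lt_irrefl 0 this
  refine ⟨c, ?_, ?_⟩
  · have hq := hgc t₀ ht₀mem
    have h1 : 0 < 1 - t₀ := by have := hIooSub ht₀mem; linarith [this.2]
    have h2 : 0 < S t₀ := lt_trans hS₀ (hmid t₀ ht₀mem).1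
    rw [← hq]; positivity
  · intro x hx
    have hq := hgc x hx
    have h1 : (0:ℝ) < 1 - x := by have := hIooSub hx; linarith [this.2]
    rw [eq_div_iff (ne_of_gt h1)]
    linarith [hq]
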